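/- Let a be a real number with a ≠ 1/2 and let n be a natural number. Then the matrix C_a(n) is invertible, and its inverse is C_{a/(2a−1)}(n); that is, C_a(n) · C_{a/(2a−1)}(n) = I and C_{a/(2a−1)}(n) · C_a(n) = I, where I is the 2^n × 2^n identity matrix. -/

import Mathlib

/-- `Cmat a b n` is the `2^n × 2^n` real matrix indexed by bit strings `x, y ∈ {0,1}^n`
whose `(x, y)` entry is `a ^ (n - d) * b ^ d`, where `d` is the Hamming distance
between `x` and `y`. -/
def Cmat (a b : ℝ) (n : ℕ) : Matrix (Fin n → Fin 2) (Fin n → Fin 2) ℝ :=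
  Matrix.of fun x y => a ^ (n - hammingDist x y) * b ^ hammingDist x y

/-- `CmatB a n` abbreviates `Cmat a (1 - a) n`. -/
def CmatB (a : ℝ) (n : ℕ) : Matrix (Fin n → Fin 2) (Fin n → Fin 2) ℝ :=
  Cmat a (1 - a) n

lemma Cmat_apply_prod (a b : ℝ) (n : ℕ) (x y : Fin n → Fin 2) :
    Cmat a b n x y = ∏ i, (if x i = y i then a else b) := by
  rw [Finset.prod_ite, Finset.prod_const, Finset.prod_const]
  have hd : hammingDist x y = (Finset.univ.filter (fun i => ¬ x i = y i)).card := rfl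
  have hc : (Finset.univ.filter (fun i => x i = y i)).card
      = n - hammingDist x y := by
    have := Finset.card_filter_add_card_filter_not
      (s := (Finset.univ : Finset (Fin n))) (p := fun i => x i = y i)
    simp only [Finset.card_univ, Fintype.card_fin] at this
    omega
  rw [← hd, hc]; rfl

lemma Cmat_mul (a b c d : ℝ) (n : ℕ) (hdiag : a * c + b * d = 1)
    (hoff : a * d + b * c = 0) :
    Cmat a b n * Cmat c d n = 1 := by
  ext x y
  simp only [Matrix.mul_apply, Cmat_apply_prod, ← Finset.prod_mul_distrib]
  rw [← Fintype.prod_sum (fun (i : Fin n) (w : Fin 2) => (if x i = w then a else b) * (if w = y i then c else d))]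
  have key : ∀ u v : Fin 2, (∑ w : Fin 2, (if u = w then a else b) * (if w = v then c else d))
      = if u = v then 1 else 0 := by
    intro u v
    fin_cases u <;> fin_cases v <;>
      simp [Fin.sum_univ_two] <;> linarith
  rw [Finset.prod_congr rfl (fun i _ => key (x i) (y i))]
  by_cases h : x = y
  · simp [h, Matrix.one_apply]
  · obtain ⟨i, hi⟩ := Function.ne_iff.mp h
    rw [Matrix.one_apply_ne h, Finset.prod_eq_zero (Finset.mem_univ i)]
    simp [hi]

theorem CmatB_inverse (a : ℝ) (ha : a ≠ 1 / 2) (n : ℕ) :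
    IsUnit (CmatB a n) ∧
      CmatB a n * CmatB (a / (2 * a - 1)) n = 1 ∧
      CmatB (a / (2 * a - 1)) n * CmatB a n = 1 := by
  have h2a : 2 * a - 1 ≠ 0 := by
    intro h; apply ha; linarith
  have hdiag : a * (a / (2 * a - 1)) + (1 - a) * (1 - a / (2 * a - 1)) = 1 := by
    have h2a' : a * 2 - 1 ≠ 0 := by rwa [mul_comm]
    field_simp; ring
  have hoff : a * (1 - a / (2 * a - 1)) + (1 - a) * (a / (2 * a - 1)) = 0 := by
    have h2a' : a * 2 - 1 ≠ 0 := by rwa [mul_comm]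
    field_simp; ring
  have h1 : CmatB a n * CmatB (a / (2 * a - 1)) n = 1 :=
    Cmat_mul _ _ _ _ n hdiag hoff
  have h2 : CmatB (a / (2 * a - 1)) n * CmatB a n = 1 :=
    Cmat_mul _ _ _ _ n (by linarith [hdiag]) (by linarith [hoff])
  exact ⟨⟨⟨_, _, h1, h2⟩, rfl⟩, h1, h2⟩
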